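/- Deterministic bound on the expected number of cuts of size r: fix 0<μ<1, n ≥ 2, 2 ≤ K_n < n, and 1 ≤ r ≤ ⌊n/2⌋. In H(n;μ,K_n), letting E_{n,r}(μ,K_n) denote the event that {v_1,…,v_r} is a cut, it holds that C(n,r) · P[E_{n,r}(μ,K_n)] ≤ ( μ + (1−μ)·(1 − r/n)^{K_n−1} )^{n}. -/

import Mathlib

open Finset Filter Asymptotics

namespace KOut

/-- A configuration: for each node, its type (`true` = type-1, `false` = type-2)
and the set of nodes it selects. -/
abbrev Config (n : ℕ) := (Fin n → Bool) × (Fin n → Finset (Fin n))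

/-- Probability density of a configuration in the inhomogeneous random K-out graph
model `H(n; μ, K)`: each node is independently type-1 with probability `μ` (type-2 with
probability `1-μ`), and, given its type, its selection set is uniform among the subsets
of the other `n-1` nodes of size `1` (type-1) resp. `K` (type-2). -/
noncomputable def density (n : ℕ) (μ : ℝ) (K : ℕ) (ω : Config n) : ℝ :=
  ∏ i : Fin n,
    ((if ω.1 i then μ else 1 - μ) *
      (if i ∉ ω.2 i ∧ (ω.2 i).card = (if ω.1 i then 1 else K)
       then ((n - 1).choose (if ω.1 i then 1 else K) : ℝ)⁻¹ else 0))

/-- Probability of an event in `H(n; μ, K)`. -/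
noncomputable def prob (n : ℕ) (μ : ℝ) (K : ℕ) (E : Set (Config n)) : ℝ :=
  ∑ ω : Config n, Set.indicator E (density n μ K) ω

/-- The (undirected) graph associated with a configuration: an edge joins two distinct
nodes iff at least one of them selects the other. -/
def graph {n : ℕ} (ω : Config n) : SimpleGraph (Fin n) where
  Adj i j := i ≠ j ∧ (j ∈ ω.2 i ∨ i ∈ ω.2 j)
  symm := ⟨fun _ _ h => ⟨h.1.symm, h.2.symm⟩⟩
  loopless := ⟨fun _ h => h.1 rfl⟩

instance {n : ℕ} (ω : Config n) : DecidableRel (graph ω).Adj :=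
  fun i j => inferInstanceAs (Decidable (i ≠ j ∧ (j ∈ ω.2 i ∨ i ∈ ω.2 j)))

/-- The mean number of selections `⟨K_n⟩ = μ + (1-μ) K_n`. -/
noncomputable def avgK (μ : ℝ) (K : ℕ) : ℝ := μ + (1 - μ) * K

lemma desc_le (a n K : ℕ) (h : a ≤ n) :
    (a-1).descFactorial K * n^K ≤ (n-1).descFactorial K * a^K := by
  have h1 : ∀ m : ℕ, m ^ K = ∏ _i ∈ range K, m := fun m => by
    rw [Finset.prod_const, Finset.card_range]
  rw [Nat.descFactorial_eq_prod_range, Nat.descFactorial_eq_prod_range, h1, h1,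
    ← Finset.prod_mul_distrib, ← Finset.prod_mul_distrib]
  refine Finset.prod_le_prod (fun _ _ => Nat.zero_le _) (fun i _ => ?_)
  rcases le_or_gt a (i+1) with h' | h'
  · have ha : a - 1 - i = 0 := by omega
    simp [ha]
  · have ha : a - 1 - i = a - (i+1) := by omega
    have hn : n - 1 - i = n - (i+1) := by omega
    rw [ha, hn, Nat.sub_mul, Nat.sub_mul, mul_comm n a]
    exact Nat.sub_le_sub_left (Nat.mul_le_mul_left (i+1) h) (a*n)

lemma choose_ratio {a n K : ℕ} (h : a ≤ n) (hn : 0 < n) (hK : K ≤ n - 1) :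
    ((a-1).choose K : ℝ) * (((n-1).choose K : ℝ))⁻¹ ≤ ((a:ℝ)/(n:ℝ))^K := by
  have hnat : (a-1).choose K * n^K ≤ (n-1).choose K * a^K := by
    have hd := desc_le a n K h
    rw [Nat.descFactorial_eq_factorial_mul_choose, Nat.descFactorial_eq_factorial_mul_choose,
      mul_assoc, mul_assoc] at hd
    exact Nat.le_of_mul_le_mul_left hd K.factorial_pos
  have hCn : 0 < (n-1).choose K := Nat.choose_pos hK
  have h2 : ((a-1).choose K : ℝ) / ((n-1).choose K : ℝ) ≤ (a:ℝ)^K / (n:ℝ)^K := by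
    rw [div_le_div_iff₀ (by exact_mod_cast hCn) (by positivity)]
    rw [mul_comm ((a:ℝ)^K)]
    exact_mod_cast hnat
  rw [div_pow]
  simpa [div_eq_mul_inv] using h2

lemma binom_term_le (n r : ℕ) (h : r ≤ n) :
    n.choose r * r^r * (n-r)^(n-r) ≤ n^n := by
  have hrn : r + (n - r) = n := by omega
  have hb : (r + (n - r))^n = ∑ k ∈ range (n+1), r^k * (n-r)^(n-k) * n.choose k :=
    add_pow r (n-r) n
  rw [hrn] at hb
  rw [hb]
  have := Finset.single_le_sum (f := fun k => r^k * (n-r)^(n-k) * n.choose k)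
    (fun _ _ => Nat.zero_le _) (Finset.mem_range.2 (by omega : r < n + 1))
  calc n.choose r * r^r * (n-r)^(n-r) = r^r * (n-r)^(n-r) * n.choose r := by ring
    _ ≤ _ := this

lemma card_filter_lt (n r : ℕ) (h : r ≤ n) :
    (univ.filter (fun i : Fin n => (i:ℕ) < r)).card = r := by
  have he : univ.filter (fun i : Fin n => (i:ℕ) < r)
      = (Finset.range r).attachFin (fun m hm => lt_of_lt_of_le (Finset.mem_range.1 hm) h) := by
    ext i
    simp [Finset.mem_attachFin]
  rw [he, Finset.card_attachFin, Finset.card_range]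

lemma sum_subsets (n k : ℕ) (i : Fin n) (T : Finset (Fin n)) (c : ℝ) :
    (∑ s : Finset (Fin n), if i ∉ s ∧ s.card = k ∧ s ⊆ T then c else 0)
      = ((T.erase i).card.choose k : ℝ) * c := by
  classical
  rw [Finset.sum_ite, Finset.sum_const, Finset.sum_const_zero, add_zero]
  have hfe : univ.filter (fun s : Finset (Fin n) => i ∉ s ∧ s.card = k ∧ s ⊆ T)
      = Finset.powersetCard k (T.erase i) := by
    ext s
    simp only [Finset.mem_filter, Finset.mem_univ, true_and, Finset.mem_powersetCard,
      Finset.subset_erase]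
    tauto
  rw [hfe, Finset.card_powersetCard, nsmul_eq_mul]


/-- Exact product formula for the probability of the cut event. -/
lemma prob_cut_eq (n : ℕ) (μ : ℝ) (K : ℕ) (r : ℕ) (hr1 : 1 ≤ r) (hrn : r ≤ n) :
    prob n μ K
        {ω | ∀ i : Fin n, (i : ℕ) < r → ∀ j : Fin n, ¬ (j : ℕ) < r → ¬ (graph ω).Adj i j}
      = (μ * ((r-1).choose 1 : ℝ) * ((n-1).choose 1 : ℝ)⁻¹
          + (1-μ) * ((r-1).choose K : ℝ) * ((n-1).choose K : ℝ)⁻¹) ^ r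
        * (μ * ((n-r-1).choose 1 : ℝ) * ((n-1).choose 1 : ℝ)⁻¹
          + (1-μ) * ((n-r-1).choose K : ℝ) * ((n-1).choose K : ℝ)⁻¹) ^ (n-r) := by
  classical
  set E : Set (Config n) :=
    {ω | ∀ i : Fin n, (i : ℕ) < r → ∀ j : Fin n, ¬ (j : ℕ) < r → ¬ (graph ω).Adj i j} with hE
  set S : Finset (Fin n) := univ.filter (fun i : Fin n => (i:ℕ) < r) with hS
  have hSmem : ∀ i : Fin n, i ∈ S ↔ (i:ℕ) < r := by
    intro i; simp [hS]
  have hScard : S.card = r := card_filter_lt n r hrn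
  set g : Fin n → Bool → Finset (Fin n) → ℝ := fun i b s =>
    (if b then μ else 1-μ) *
      (if i ∉ s ∧ s.card = (if b then 1 else K) ∧ s ⊆ (if (i:ℕ) < r then S else Sᶜ)
       then ((n-1).choose (if b then 1 else K) : ℝ)⁻¹ else 0) with hg
  have hfac : ∀ ω : Config n,
      Set.indicator E (density n μ K) ω = ∏ i, g i (ω.1 i) (ω.2 i) := by
    intro ω
    by_cases hω : ω ∈ E
    · rw [Set.indicator_of_mem hω, density]
      refine Finset.prod_congr rfl fun i _ => ?_
      have hsub : ω.2 i ⊆ (if (i:ℕ) < r then S else Sᶜ) := by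
        intro j hj
        by_cases hi : (i:ℕ) < r
        · rw [if_pos hi, hSmem]
          by_contra hjr
          exact hω i hi j hjr ⟨fun hij => hjr (hij ▸ hi), Or.inl hj⟩
        · rw [if_neg hi]
          rw [Finset.mem_compl, hSmem]
          intro hjr
          exact hω j hjr i hi ⟨fun hij => hi (hij ▸ hjr), Or.inr hj⟩
      simp only [hg]
      congr 1
      refine if_congr ?_ rfl rfl
      constructor
      · rintro ⟨h1, h2⟩; exact ⟨h1, h2, hsub⟩
      · rintro ⟨h1, h2, _⟩; exact ⟨h1, h2⟩
    · rw [Set.indicator_of_notMem hω]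
      simp only [hE, Set.mem_setOf_eq] at hω
      push_neg at hω
      obtain ⟨i, hi, j, hj0, hadj⟩ := hω
      have hj : ¬ (j:ℕ) < r := not_lt.2 hj0
      rcases hadj.2 with hc | hc
      · symm
        refine Finset.prod_eq_zero (Finset.mem_univ i) ?_
        have hcond : ¬ (i ∉ ω.2 i ∧ (ω.2 i).card = (if ω.1 i then 1 else K) ∧
            ω.2 i ⊆ (if (i:ℕ) < r then S else Sᶜ)) := by
          rintro ⟨-, -, hs⟩
          have := hs hc
          rw [if_pos hi, hSmem] at this
          exact hj this
        simp only [hg, if_neg hcond, mul_zero]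
      · symm
        refine Finset.prod_eq_zero (Finset.mem_univ j) ?_
        have hcond : ¬ (j ∉ ω.2 j ∧ (ω.2 j).card = (if ω.1 j then 1 else K) ∧
            ω.2 j ⊆ (if (j:ℕ) < r then S else Sᶜ)) := by
          rintro ⟨-, -, hs⟩
          have := hs hc
          rw [if_neg hj, Finset.mem_compl, hSmem] at this
          exact this hi
        simp only [hg, if_neg hcond, mul_zero]
  have hstep : prob n μ K E
      = ∏ i : Fin n, ((∑ s : Finset (Fin n), g i true s) + ∑ s : Finset (Fin n), g i false s) := by
    rw [prob]
    calc ∑ ω : Config n, Set.indicator E (density n μ K) ω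
        = ∑ ω : Config n, ∏ i, g i (ω.1 i) (ω.2 i) :=
          Finset.sum_congr rfl fun ω _ => hfac ω
      _ = ∑ b : Fin n → Bool, ∑ t : Fin n → Finset (Fin n), ∏ i, g i (b i) (t i) :=
          Fintype.sum_prod_type _
      _ = ∑ b : Fin n → Bool, ∏ i, ∑ s : Finset (Fin n), g i (b i) s := by
          refine Finset.sum_congr rfl fun b _ => ?_
          exact (Fintype.prod_sum (fun i s => g i (b i) s)).symm
      _ = ∏ i, ∑ b : Bool, ∑ s : Finset (Fin n), g i b s :=
          (Fintype.prod_sum (fun i (b : Bool) => ∑ s : Finset (Fin n), g i b s)).symm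
      _ = _ := Finset.prod_congr rfl fun i _ => Fintype.sum_bool _
  -- per node sums
  have hone : ∀ (i : Fin n) (b : Bool),
      (∑ s : Finset (Fin n), g i b s)
        = (if b then μ else 1-μ) *
            ((((if (i:ℕ) < r then S else Sᶜ).erase i).card.choose (if b then 1 else K) : ℝ)
              * ((n-1).choose (if b then 1 else K) : ℝ)⁻¹) := by
    intro i b
    simp only [hg]
    rw [← Finset.mul_sum]
    congr 1
    exact sum_subsets n (if b then 1 else K) i _ _
  have hcardS : ∀ i : Fin n, (i:ℕ) < r → ((if (i:ℕ) < r then S else Sᶜ).erase i).card = r - 1 := by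
    intro i hi
    rw [if_pos hi, Finset.card_erase_of_mem ((hSmem i).2 hi), hScard]
  have hcardSc : ∀ i : Fin n, ¬ (i:ℕ) < r →
      ((if (i:ℕ) < r then S else Sᶜ).erase i).card = n - r - 1 := by
    intro i hi
    rw [if_neg hi, Finset.card_erase_of_mem (by rw [Finset.mem_compl, hSmem]; exact hi),
      Finset.card_compl, hScard, Fintype.card_fin]
  rw [hstep]
  rw [← Finset.prod_mul_prod_compl S]
  have hA : ∀ i ∈ S,
      ((∑ s : Finset (Fin n), g i true s) + ∑ s : Finset (Fin n), g i false s)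
        = (μ * ((r-1).choose 1 : ℝ) * ((n-1).choose 1 : ℝ)⁻¹
          + (1-μ) * ((r-1).choose K : ℝ) * ((n-1).choose K : ℝ)⁻¹) := by
    intro i hi
    rw [hone, hone, hcardS i ((hSmem i).1 hi)]
    norm_num
    ring
  have hB : ∀ i ∈ Sᶜ,
      ((∑ s : Finset (Fin n), g i true s) + ∑ s : Finset (Fin n), g i false s)
        = (μ * ((n-r-1).choose 1 : ℝ) * ((n-1).choose 1 : ℝ)⁻¹
          + (1-μ) * ((n-r-1).choose K : ℝ) * ((n-1).choose K : ℝ)⁻¹) := by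
    intro i hi
    rw [Finset.mem_compl, hSmem] at hi
    rw [hone, hone, hcardSc i hi]
    norm_num
    ring
  rw [Finset.prod_congr rfl hA, Finset.prod_congr rfl hB, Finset.prod_const, Finset.prod_const,
    hScard, Finset.card_compl, hScard, Fintype.card_fin]


/-- Deterministic bound on the expected number of cuts of size `r`
(for `1 ≤ r ≤ ⌊n/2⌋`): with `E_{n,r}` the event that `{v_1,…,v_r}` is a cut,
`C(n,r) · P[E_{n,r}] ≤ (μ + (1-μ)(1 - r/n)^(K-1))^n`. -/
theorem expected_cut_count_bound
    (μ : ℝ) (hμ0 : 0 < μ) (hμ1 : μ < 1)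
    (n : ℕ) (hn : 2 ≤ n) (K : ℕ) (hK : 2 ≤ K) (hKn : K < n)
    (r : ℕ) (hr1 : 1 ≤ r) (hr2 : r ≤ n / 2) :
    (n.choose r : ℝ) *
        prob n μ K
          {ω | ∀ i : Fin n, (i : ℕ) < r → ∀ j : Fin n, ¬ (j : ℕ) < r → ¬ (graph ω).Adj i j} ≤
      (μ + (1 - μ) * (1 - (r : ℝ) / (n : ℝ)) ^ (K - 1)) ^ n := by
  have hrn : r ≤ n := le_trans hr2 (Nat.div_le_self n 2)
  have h2r : 2 * r ≤ n := by omega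
  have hnpos : 0 < n := by omega
  have hn0 : (0:ℝ) < n := by exact_mod_cast hnpos
  have hKn1 : K ≤ n - 1 := by omega
  have h1n1 : 1 ≤ n - 1 := by omega
  set x : ℝ := (r:ℝ)/n with hxdef
  set q : ℝ := μ + (1 - μ) * (1 - x)^(K-1) with hqdef
  have hx0 : 0 ≤ x := by positivity
  have hx1 : x ≤ 1 := by
    rw [hxdef, div_le_one hn0]; exact_mod_cast hrn
  have hxy : x ≤ 1 - x := by
    have h2 : (2*r:ℝ) ≤ n := by exact_mod_cast h2r
    have : x + x ≤ 1 := by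
      have : (r:ℝ)/n + (r:ℝ)/n = (2*r:ℝ)/n := by ring
      rw [hxdef, this, div_le_one hn0]; exact h2
    linarith
  have h1x0 : 0 ≤ 1 - x := by linarith
  have hμ1' : (0:ℝ) ≤ 1 - μ := by linarith
  have hq0 : 0 ≤ q := by
    rw [hqdef]
    have := mul_nonneg hμ1' (pow_nonneg h1x0 (K-1))
    linarith
  have hy : ((n-r:ℕ):ℝ)/n = 1 - x := by
    rw [Nat.cast_sub hrn, hxdef]
    field_simp
  have hpowx : x^K = x^(K-1) * x := by
    have hK1 : K - 1 + 1 = K := by omega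
    rw [← hK1, pow_succ, hK1]
  have hpowy : (1-x)^K = (1-x)^(K-1) * (1-x) := by
    have hK1 : K - 1 + 1 = K := by omega
    rw [← hK1, pow_succ, hK1]
  -- bounds on the two bases
  have t1 : ((r-1).choose 1 : ℝ) * ((n-1).choose 1 : ℝ)⁻¹ ≤ x^1 :=
    choose_ratio hrn hnpos h1n1
  have t2 : ((r-1).choose K : ℝ) * ((n-1).choose K : ℝ)⁻¹ ≤ x^K :=
    choose_ratio hrn hnpos hKn1
  have u1 : ((n-r-1).choose 1 : ℝ) * ((n-1).choose 1 : ℝ)⁻¹ ≤ (1-x)^1 := by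
    have := choose_ratio (Nat.sub_le n r) hnpos h1n1
    rwa [hy] at this
  have u2 : ((n-r-1).choose K : ℝ) * ((n-1).choose K : ℝ)⁻¹ ≤ (1-x)^K := by
    have := choose_ratio (Nat.sub_le n r) hnpos hKn1
    rwa [hy] at this
  set A : ℝ := μ * ((r-1).choose 1 : ℝ) * ((n-1).choose 1 : ℝ)⁻¹
      + (1-μ) * ((r-1).choose K : ℝ) * ((n-1).choose K : ℝ)⁻¹ with hAdef
  set B : ℝ := μ * ((n-r-1).choose 1 : ℝ) * ((n-1).choose 1 : ℝ)⁻¹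
      + (1-μ) * ((n-r-1).choose K : ℝ) * ((n-1).choose K : ℝ)⁻¹ with hBdef
  have hA0 : 0 ≤ A := by
    rw [hAdef]
    refine add_nonneg (mul_nonneg (mul_nonneg hμ0.le (by positivity)) (by positivity))
      (mul_nonneg (mul_nonneg hμ1' (by positivity)) (by positivity))
  have hB0 : 0 ≤ B := by
    rw [hBdef]
    refine add_nonneg (mul_nonneg (mul_nonneg hμ0.le (by positivity)) (by positivity))
      (mul_nonneg (mul_nonneg hμ1' (by positivity)) (by positivity))
  have hxK : x^(K-1) ≤ (1-x)^(K-1) := pow_le_pow_left₀ hx0 hxy _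
  have hA_le : A ≤ x * q := by
    have step1 : A ≤ μ * x^1 + (1-μ) * x^K := by
      rw [hAdef, mul_assoc, mul_assoc]
      exact add_le_add (mul_le_mul_of_nonneg_left t1 hμ0.le) (mul_le_mul_of_nonneg_left t2 hμ1')
    have step2 : μ * x^1 + (1-μ) * x^K = x * (μ + (1-μ) * x^(K-1)) := by
      rw [pow_one, hpowx]; ring
    have step3 : μ + (1-μ) * x^(K-1) ≤ q := by
      rw [hqdef]
      have := mul_le_mul_of_nonneg_left hxK hμ1'
      linarith
    calc A ≤ μ * x^1 + (1-μ) * x^K := step1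
      _ = x * (μ + (1-μ) * x^(K-1)) := step2
      _ ≤ x * q := mul_le_mul_of_nonneg_left step3 hx0
  have hB_le : B ≤ (1-x) * q := by
    have step1 : B ≤ μ * (1-x)^1 + (1-μ) * (1-x)^K := by
      rw [hBdef, mul_assoc, mul_assoc]
      exact add_le_add (mul_le_mul_of_nonneg_left u1 hμ0.le) (mul_le_mul_of_nonneg_left u2 hμ1')
    have step2 : μ * (1-x)^1 + (1-μ) * (1-x)^K = (1-x) * q := by
      rw [pow_one, hpowy, hqdef]; ring
    linarith
  rw [prob_cut_eq n μ K r hr1 hrn, ← hAdef, ← hBdef]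
  have hC0 : (0:ℝ) ≤ (n.choose r : ℝ) := by positivity
  have main1 : (n.choose r : ℝ) * (A^r * B^(n-r))
      ≤ (n.choose r : ℝ) * ((x*q)^r * ((1-x)*q)^(n-r)) := by
    have pA : A^r ≤ (x*q)^r := pow_le_pow_left₀ hA0 hA_le r
    have pB : B^(n-r) ≤ ((1-x)*q)^(n-r) := pow_le_pow_left₀ hB0 hB_le (n-r)
    have hxq0 : 0 ≤ (x*q)^r := pow_nonneg (mul_nonneg hx0 hq0) r
    have hB0' : 0 ≤ B^(n-r) := pow_nonneg hB0 (n-r)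
    exact mul_le_mul_of_nonneg_left
      (mul_le_mul pA pB hB0' hxq0) hC0
  have hsplit : (n.choose r : ℝ) * ((x*q)^r * ((1-x)*q)^(n-r))
      = ((n.choose r : ℝ) * x^r * (1-x)^(n-r)) * (q^r * q^(n-r)) := by
    rw [mul_pow, mul_pow]; ring
  have hqpow : q^r * q^(n-r) = q^n := by
    rw [← pow_add]; congr 1; omega
  have hterm : (n.choose r : ℝ) * x^r * (1-x)^(n-r) ≤ 1 := by
    rw [← hy, hxdef, div_pow, div_pow]
    have hnn : (n:ℝ)^r * (n:ℝ)^(n-r) = (n:ℝ)^n := by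
      rw [← pow_add]; congr 1; omega
    have hre : (n.choose r : ℝ) * ((r:ℝ)^r/(n:ℝ)^r) * (((n-r:ℕ):ℝ)^(n-r)/(n:ℝ)^(n-r))
        = ((n.choose r : ℝ) * (r:ℝ)^r * ((n-r:ℕ):ℝ)^(n-r)) / ((n:ℝ)^r * (n:ℝ)^(n-r)) := by
      ring
    rw [hre, hnn, div_le_one (by positivity)]
    exact_mod_cast binom_term_le n r hrn
  calc (n.choose r : ℝ) * (A^r * B^(n-r))
      ≤ (n.choose r : ℝ) * ((x*q)^r * ((1-x)*q)^(n-r)) := main1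
    _ = ((n.choose r : ℝ) * x^r * (1-x)^(n-r)) * (q^r * q^(n-r)) := hsplit
    _ ≤ 1 * q^n := by
        rw [hqpow]
        exact mul_le_mul_of_nonneg_right hterm (pow_nonneg hq0 n)
    _ = q^n := one_mul _

end KOut
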